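/- (Sauer-Shelah Lemma) Let H=(X,E) be a hypergraph with more than ∑_{i=0}^{d-1} binom(|X|, i) distinct hyperedges. Then H has VC dimension at least d, i.e., there exists a set S ⊆ X with |S| = d that is shattered by E. -/

import Mathlib

/-- Sauer-Shelah Lemma: a hypergraph with more than `∑_{i<d} C(|X|,i)` distinct
hyperedges has VC dimension at least `d`: some `d`-set is shattered. -/
theorem stmt_4 {α : Type*} [DecidableEq α] (X : Finset α) (E : Finset (Finset α))
    (hE : ∀ e ∈ E, e ⊆ X) (d : ℕ)
    (hcard : ∑ i ∈ Finset.range d, (X.card).choose i < E.card) :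
    ∃ S ⊆ X, S.card = d ∧ ∀ T ⊆ S, ∃ e ∈ E, e ∩ S = T := by
  by_contra h
  push_neg at h
  have key : E.shatterer ⊆ (Finset.range d).biUnion (fun i => X.powersetCard i) := by
    intro s hs
    rw [Finset.mem_shatterer] at hs
    obtain ⟨e, he, hes⟩ := hs Finset.Subset.rfl
    have hsX : s ⊆ X := by
      rw [Finset.inter_eq_left] at hes
      exact hes.trans (hE e he)
    have hsd : s.card < d := by
      by_contra hge
      push_neg at hge
      obtain ⟨S, hSs, hSd⟩ := Finset.exists_subset_card_eq (s := s) (n := d) hge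
      obtain ⟨T, hT, hTne⟩ := h S (hSs.trans hsX) hSd
      obtain ⟨e', he', he'S⟩ := (hs.mono_right hSs) hT
      exact hTne e' he' (by rw [Finset.inter_comm]; exact he'S)
    simp only [Finset.mem_biUnion, Finset.mem_range, Finset.mem_powersetCard]
    exact ⟨s.card, hsd, hsX, rfl⟩
  have h1 := E.card_le_card_shatterer
  have h2 := Finset.card_le_card key
  have hb : ((Finset.range d).biUnion (fun i => X.powersetCard i)).card
      ≤ ∑ i ∈ Finset.range d, (X.card).choose i := by
    refine Finset.card_biUnion_le.trans ?_
    simp [Finset.card_powersetCard]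
  omega
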